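/- arXiv:1609.08057 — 2 statements merged into one kernel-verified Lean document; each statement's English description precedes it below -/
import Mathlib

section
/- Let Δ(t) ∈ ℤ[t^{±1}] satisfy Δ(1) = ±1. Then the natural map Δ(t)^{-1}ℤ[t^{±1}]/ℤ[t^{±1}] → ℚ(t)/Λ_S, induced by the inclusion Δ(t)^{-1}ℤ[t^{±1}] ⊆ ℚ(t), is injective, where Λ_S = ℤ[t^{±1}, (1-t)^{-1}]. -/
open LaurentPolynomial

/-- Evaluation of a Laurent polynomial over `ℤ` at `t = 1` (the ring homomorphism
`ℤ[T;T⁻¹] → ℤ` sending `T ↦ 1`). -/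
noncomputable def laurentEvalOne : LaurentPolynomial ℤ →+* ℤ :=
  AddMonoidAlgebra.liftNCRingHom (RingHom.id ℤ) 1 (fun _ _ => Commute.one_right _)

lemma laurentEvalOne_C_mul_T (a : ℤ) (n : ℤ) :
    laurentEvalOne (LaurentPolynomial.C a * T n) = a := by
  rw [← single_eq_C_mul_T]
  simpa [laurentEvalOne, AddMonoidAlgebra.liftNCRingHom] using
    AddMonoidAlgebra.liftNC_single (R := ℤ) (G := ℤ)
      ((RingHom.id ℤ) : ℤ →+ ℤ) (1 : Multiplicative ℤ →* ℤ) n a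

lemma one_sub_T_dvd (n : ℤ) : (1 - T 1 : LaurentPolynomial ℤ) ∣ 1 - T n := by
  obtain ⟨m, rfl | rfl⟩ := Int.eq_nat_or_neg n
  · have : ((T 1 : LaurentPolynomial ℤ)) ^ m = T (m : ℤ) := by
      rw [T_pow]; ring_nf
    calc (1 - T 1 : LaurentPolynomial ℤ) ∣ 1 ^ m - (T 1) ^ m :=
          sub_dvd_pow_sub_pow 1 (T 1) m
      _ = 1 - T (m : ℤ) := by rw [one_pow, this]
  · have key : (1 - T (-(m : ℤ)) : LaurentPolynomial ℤ)
        = T (-(m : ℤ)) * -(1 - T (m : ℤ)) := by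
      rw [mul_neg, mul_sub, mul_one, ← T_add]
      simp
    rw [key]
    exact Dvd.dvd.mul_left ((one_sub_T_dvd_aux m)) _
where
  one_sub_T_dvd_aux (m : ℕ) : (1 - T 1 : LaurentPolynomial ℤ) ∣ -(1 - T (m : ℤ)) := by
    have : ((T 1 : LaurentPolynomial ℤ)) ^ m = T (m : ℤ) := by
      rw [T_pow]; ring_nf
    refine Dvd.dvd.neg_right ?_
    calc (1 - T 1 : LaurentPolynomial ℤ) ∣ 1 ^ m - (T 1) ^ m :=
          sub_dvd_pow_sub_pow 1 (T 1) m
      _ = 1 - T (m : ℤ) := by rw [one_pow, this]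

lemma one_sub_T_dvd_sub_eval (f : LaurentPolynomial ℤ) :
    (1 - T 1 : LaurentPolynomial ℤ) ∣ f - LaurentPolynomial.C (laurentEvalOne f) := by
  induction f using LaurentPolynomial.induction_on' with
  | add p q hp hq =>
    have : p + q - LaurentPolynomial.C (laurentEvalOne (p + q))
        = (p - LaurentPolynomial.C (laurentEvalOne p))
          + (q - LaurentPolynomial.C (laurentEvalOne q)) := by
      rw [map_add, map_add]; ring
    rw [this]
    exact dvd_add hp hq
  | C_mul_T n a =>
    rw [laurentEvalOne_C_mul_T]
    have : LaurentPolynomial.C a * T n - LaurentPolynomial.C a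
        = LaurentPolynomial.C a * -(1 - T n) := by ring
    rw [this]
    exact Dvd.dvd.mul_left (Dvd.dvd.neg_right (one_sub_T_dvd n)) _

/-- Let `Δ ∈ ℤ[t^{±1}]` with `Δ(1) = ±1`.  Then the natural map
`Δ⁻¹ℤ[t^{±1}]/ℤ[t^{±1}] → ℚ(t)/Λ_S` is injective, where `Λ_S = ℤ[t^{±1},(1-t)^{-1}]`.
Concretely: inside the fraction field `ℚ(t)` of `ℤ[T;T⁻¹]`, if an element `p/Δ` of
`Δ⁻¹ℤ[t^{±1}]` lies in `Λ_S` (i.e. equals `q/(1-t)^k` for some `q ∈ ℤ[t^{±1}]`, `k ∈ ℕ`),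
then it already lies in `ℤ[t^{±1}]`. -/
theorem deltaInv_mod_laurent_to_ratfunc_mod_lambdaS_injective
    (Δ : LaurentPolynomial ℤ) (hΔ : laurentEvalOne Δ = 1 ∨ laurentEvalOne Δ = -1)
    (p q : LaurentPolynomial ℤ) (k : ℕ)
    (h : algebraMap (LaurentPolynomial ℤ) (FractionRing (LaurentPolynomial ℤ)) p /
          algebraMap (LaurentPolynomial ℤ) (FractionRing (LaurentPolynomial ℤ)) Δ =
        algebraMap (LaurentPolynomial ℤ) (FractionRing (LaurentPolynomial ℤ)) q /
          algebraMap (LaurentPolynomial ℤ) (FractionRing (LaurentPolynomial ℤ))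
            ((1 - T 1) ^ k)) :
    ∃ r : LaurentPolynomial ℤ,
      algebraMap (LaurentPolynomial ℤ) (FractionRing (LaurentPolynomial ℤ)) p /
          algebraMap (LaurentPolynomial ℤ) (FractionRing (LaurentPolynomial ℤ)) Δ =
        algebraMap (LaurentPolynomial ℤ) (FractionRing (LaurentPolynomial ℤ)) r := by
  set K := FractionRing (LaurentPolynomial ℤ)
  set φ := algebraMap (LaurentPolynomial ℤ) K
  have hφinj : Function.Injective φ := IsFractionRing.injective _ _
  -- Δ ≠ 0
  have hΔ0 : Δ ≠ 0 := by
    intro h0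
    rcases hΔ with h1 | h1 <;> rw [h0, map_zero] at h1 <;> omega
  -- 1 - T 1 ≠ 0
  have hT0 : (1 - T 1 : LaurentPolynomial ℤ) ≠ 0 := by
    have : (1 - T 1 : LaurentPolynomial ℤ)
        = Polynomial.toLaurent (1 - Polynomial.X) := by
      rw [map_sub, Polynomial.toLaurent_one, Polynomial.toLaurent_X]
    rw [this, Polynomial.toLaurent_ne_zero]
    intro hc
    have := congrArg (fun f => Polynomial.coeff f 1) hc
    simp [Polynomial.coeff_one] at this
  have hTk0 : ((1 - T 1 : LaurentPolynomial ℤ)) ^ k ≠ 0 := pow_ne_zero _ hT0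
  -- coprimality
  have hcop : IsCoprime Δ (1 - T 1 : LaurentPolynomial ℤ) := by
    obtain ⟨g, hg⟩ := one_sub_T_dvd_sub_eval Δ
    set e := laurentEvalOne Δ
    have he : (LaurentPolynomial.C e : LaurentPolynomial ℤ) * LaurentPolynomial.C e = 1 := by
      rw [← map_mul]
      rcases hΔ with h1 | h1 <;> rw [h1] <;> norm_num
    refine ⟨LaurentPolynomial.C e, -(LaurentPolynomial.C e * g), ?_⟩
    have hΔeq : Δ = LaurentPolynomial.C e + (1 - T 1) * g := by
      rw [← hg]; ring
    rw [hΔeq]; ring_nf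
    rw [mul_comm] at he
    linear_combination he
  have hcopk : IsCoprime Δ ((1 - T 1 : LaurentPolynomial ℤ) ^ k) := hcop.pow_right
  -- cross multiply
  have hφΔ : φ Δ ≠ 0 := fun hc => hΔ0 (hφinj (by rw [hc, map_zero]))
  have hφT : φ ((1 - T 1) ^ k) ≠ 0 := fun hc => hTk0 (hφinj (by rw [hc, map_zero]))
  have hcross : p * (1 - T 1) ^ k = q * Δ := by
    rw [div_eq_div_iff hφΔ hφT] at h
    apply hφinj
    rw [map_mul, map_mul]
    exact h
  have hdvd : Δ ∣ p * (1 - T 1) ^ k := ⟨q, by rw [hcross, mul_comm]⟩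
  have hdvdp : Δ ∣ p := hcopk.dvd_of_dvd_mul_right hdvd
  obtain ⟨r, hr⟩ := hdvdp
  refine ⟨r, ?_⟩
  rw [hr, map_mul, mul_comm (φ Δ), mul_div_assoc, div_self hφΔ, mul_one]
end

section
/- Let R be a commutative ring with involution r ↦ r̄, let Q be its field of fractions (assume R is a domain, involution extending to Q), and let H be an n×n Hermitian matrix over R (H̄^T = H) that is invertible over Q. Then the pairing on R^n/H^T R^n × R^n/H^T R^n given by (a,b) ↦ −a^T H^{-1} b̄ ∈ Q/R is well-defined (independent of representatives), sesquilinear (linear in a, conjugate-linear in b), and Hermitian: the pairing of (a,b) equals the conjugate of the pairing of (b,a) in Q/R. -/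
open Matrix

/-- The Seifert-matrix pairing `(a, b) ↦ −aᵀ H⁻¹ b̄`, with values in the fraction field
`Q = Frac(R)`, where `H⁻¹` is computed over `Q` and `b̄` is the entrywise application
of the involution `σ` of `R`. -/
noncomputable def seifertPairing {R : Type*} [CommRing R] [IsDomain R] {n : ℕ}
    (σ : R ≃+* R) (H : Matrix (Fin n) (Fin n) R) (a b : Fin n → R) : FractionRing R :=
  -(dotProduct (fun i => algebraMap R (FractionRing R) (a i))
    (((H.map (algebraMap R (FractionRing R)))⁻¹).mulVec
      (fun i => algebraMap R (FractionRing R) (σ (b i)))))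

/-- The quotient map `Q → Q/R`, where `Q/R` is the quotient of `Q = Frac(R)` by the
image of `R`, as a map of `R`-modules. -/
noncomputable def modR (R : Type*) [CommRing R] [IsDomain R] :
    FractionRing R →ₗ[R]
      (FractionRing R ⧸ LinearMap.range (Algebra.linearMap R (FractionRing R))) :=
  Submodule.mkQ (LinearMap.range (Algebra.linearMap R (FractionRing R)))

set_option maxHeartbeats 1000000

/-- Let `R` be an integral domain with involution `σ`, `Q = Frac(R)` with
the induced involution `τ`, and let `H` be an `n×n` Hermitian matrix over `R`
(`conjugate-transpose(H) = H`) invertible over `Q` (`det H ≠ 0`).  Then the pairing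
`(a,b) ↦ −aᵀ H⁻¹ b̄ ∈ Q/R` on `R^n/HᵀR^n`:
(1) is well defined (independent of the representatives modulo `Hᵀ R^n`);
(2) is additive and `R`-linear in the first variable;
(3) is additive and conjugate-linear in the second variable;
(4) is Hermitian: `⟨a,b⟩ = τ⟨b,a⟩` in `Q/R`. -/
theorem seifertPairing_wellDefined_sesquilinear_hermitian
    {R : Type*} [CommRing R] [IsDomain R] {n : ℕ}
    (σ : R ≃+* R) (hσ : ∀ r, σ (σ r) = r)
    (τ : FractionRing R ≃+* FractionRing R)
    (hτ : ∀ r : R, τ (algebraMap R (FractionRing R) r) = algebraMap R (FractionRing R) (σ r))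
    (H : Matrix (Fin n) (Fin n) R)
    (hherm : (H.map σ)ᵀ = H) (hdet : H.det ≠ 0) :
    (∀ (a b x y : Fin n → R),
      modR R (seifertPairing σ H (a + Hᵀ.mulVec x) (b + Hᵀ.mulVec y)) =
        modR R (seifertPairing σ H a b)) ∧
    (∀ (a a' b : Fin n → R) (r : R),
      modR R (seifertPairing σ H (a + a') b) =
          modR R (seifertPairing σ H a b) + modR R (seifertPairing σ H a' b) ∧
      modR R (seifertPairing σ H (r • a) b) = r • modR R (seifertPairing σ H a b)) ∧
    (∀ (a b b' : Fin n → R) (r : R),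
      modR R (seifertPairing σ H a (b + b')) =
          modR R (seifertPairing σ H a b) + modR R (seifertPairing σ H a b') ∧
      modR R (seifertPairing σ H a (r • b)) = σ r • modR R (seifertPairing σ H a b)) ∧
    (∀ a b : Fin n → R,
      modR R (seifertPairing σ H a b) = modR R (τ (seifertPairing σ H b a))) := by
  classical
  set Q := FractionRing R
  set φ : R →+* Q := algebraMap R Q with hφ
  set M : Matrix (Fin n) (Fin n) Q := H.map φ with hM
  have hinj : Function.Injective φ := IsFractionRing.injective R Q
  have hMdet : IsUnit M.det := by
    have : M.det = φ H.det := (RingHom.map_det φ H).symm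
    rw [this]
    exact isUnit_iff_ne_zero.2 (fun h => hdet (hinj (by simpa using h)))
  have hMM : M * M⁻¹ = 1 := Matrix.mul_nonsing_inv M hMdet
  have hMM' : M⁻¹ * M = 1 := Matrix.nonsing_inv_mul M hMdet
  set e : (Fin n → R) → (Fin n → Q) := fun v i => φ (v i) with he
  set c : (Fin n → R) → (Fin n → Q) := fun v i => φ (σ (v i)) with hc
  have hpair : ∀ a b, seifertPairing σ H a b = -(e a ⬝ᵥ M⁻¹ *ᵥ c b) := fun a b => rfl
  -- e of Hᵀ *ᵥ x
  have hfstv : ∀ x : Fin n → R, e (Hᵀ *ᵥ x) = Mᵀ *ᵥ e x := by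
    intro x; funext i
    simp [he, hM, Matrix.mulVec, dotProduct, map_sum, Matrix.map_apply]
  have hsndv : ∀ y : Fin n → R, c (Hᵀ *ᵥ y) = M *ᵥ c y := by
    intro y; funext i
    have : ∀ j, σ (Hᵀ i j) = H i j := by
      intro j
      have := congrArg (fun A => A i j) hherm
      simpa [Matrix.transpose, Matrix.map] using this
    simp [hc, hM, Matrix.mulVec, dotProduct, map_sum, Matrix.map_apply, ← this, mul_comm]
  have key : ∀ w, M⁻¹ *ᵥ (M *ᵥ w) = w := by
    intro w; rw [Matrix.mulVec_mulVec, hMM', Matrix.one_mulVec]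
  have key' : ∀ w, M *ᵥ (M⁻¹ *ᵥ w) = w := by
    intro w; rw [Matrix.mulVec_mulVec, hMM, Matrix.one_mulVec]
  -- dot products of "integral" vectors
  have hdot : ∀ (u : Fin n → R) (v : Fin n → Q), e u ⬝ᵥ v = 0 ∨ True := fun _ _ => Or.inr trivial
  have hint : ∀ u v : Fin n → R, e u ⬝ᵥ c v = φ (u ⬝ᵥ fun i => σ (v i)) := by
    intro u v; simp [he, hc, dotProduct, map_sum]
  have hzero : ∀ r : R, modR R (φ r) = 0 := by
    intro r
    have : φ r ∈ LinearMap.range (Algebra.linearMap R Q) := ⟨r, rfl⟩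
    simpa [modR] using (Submodule.Quotient.mk_eq_zero _).2 this
  -- additivity and linearity in first slot
  have hadd1 : ∀ a a' b : Fin n → R,
      seifertPairing σ H (a + a') b = seifertPairing σ H a b + seifertPairing σ H a' b := by
    intro a a' b
    have : e (a + a') = e a + e a' := by funext i; simp [he]
    simp [hpair, this, add_dotProduct, neg_add, add_comm]
  have hsmul1 : ∀ (a b : Fin n → R) (r : R),
      seifertPairing σ H (r • a) b = φ r * seifertPairing σ H a b := by
    intro a b r
    have : e (r • a) = φ r • e a := by funext i; simp [he, Algebra.smul_def]
    simp [hpair, this, smul_dotProduct, smul_eq_mul, mul_neg]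
    ring
  -- additivity and conjugate-linearity in second slot
  have hadd2 : ∀ a b b' : Fin n → R,
      seifertPairing σ H a (b + b') = seifertPairing σ H a b + seifertPairing σ H a b' := by
    intro a b b'
    have : c (b + b') = c b + c b' := by funext i; simp [hc]
    simp [hpair, this, Matrix.mulVec_add, dotProduct_add, neg_add, add_comm]
  have hsmul2 : ∀ (a b : Fin n → R) (r : R),
      seifertPairing σ H a (r • b) = φ (σ r) * seifertPairing σ H a b := by
    intro a b r
    have : c (r • b) = φ (σ r) • c b := by funext i; simp [hc, Algebra.smul_def]
    simp [hpair, this, Matrix.mulVec_smul, dotProduct_smul, smul_eq_mul, mul_neg]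
    ring
  -- vanishing terms
  have hv1 : ∀ (x b : Fin n → R), modR R (seifertPairing σ H (Hᵀ *ᵥ x) b) = 0 := by
    intro x b
    have : seifertPairing σ H (Hᵀ *ᵥ x) b = φ (-(x ⬝ᵥ fun i => σ (b i))) := by
      rw [hpair, hfstv, Matrix.mulVec_transpose, ← Matrix.dotProduct_mulVec, key', hint, map_neg]
    rw [this, hzero]
  have hv2 : ∀ (a y : Fin n → R), modR R (seifertPairing σ H a (Hᵀ *ᵥ y)) = 0 := by
    intro a y
    have : seifertPairing σ H a (Hᵀ *ᵥ y) = φ (-(a ⬝ᵥ fun i => σ (y i))) := by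
      rw [hpair, hsndv, key, hint, map_neg]
    rw [this, hzero]
  refine ⟨?_, ?_, ?_, ?_⟩
  · intro a b x y
    rw [hadd1, hadd2, hadd2, map_add, map_add, map_add, hv2, hv2, hv1]
    have := hv1 ((x : Fin n → R)) b
    simp [this]
  · intro a a' b r
    refine ⟨by rw [hadd1, map_add], ?_⟩
    rw [hsmul1]
    have : φ r * seifertPairing σ H a b = r • seifertPairing σ H a b := (Algebra.smul_def r _).symm
    rw [this]
    exact (modR R).map_smul r _
  · intro a b b' r
    refine ⟨by rw [hadd2, map_add], ?_⟩
    rw [hsmul2]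
    have : φ (σ r) * seifertPairing σ H a b = σ r • seifertPairing σ H a b :=
      (Algebra.smul_def (σ r) _).symm
    rw [this]
    exact (modR R).map_smul (σ r) _
  · intro a b
    -- Hermitian symmetry: exact equality in Q
    have hMσ : H.map ⇑σ = Hᵀ := by
      have := congrArg Matrix.transpose hherm
      simpa using this
    have hMτ : M.map ⇑τ = Mᵀ := by
      funext i j
      simp only [hM, Matrix.map_apply, Matrix.transpose_apply]
      rw [hτ]
      exact congrArg φ (by simpa [Matrix.map] using congrArg (fun A => A i j) hMσ)
    have hinvmap : M⁻¹.map ⇑τ = (M⁻¹)ᵀ := by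
      have h1 : M.map ⇑τ * M⁻¹.map ⇑τ = 1 := by
        show M.map ⇑τ.toRingHom * M⁻¹.map ⇑τ.toRingHom = 1
        rw [← Matrix.map_mul, hMM]
        exact Matrix.map_one _ (map_zero _) (map_one _)
      have h2 : (M.map ⇑τ)⁻¹ = M⁻¹.map ⇑τ := Matrix.inv_eq_right_inv h1
      rw [← h2, hMτ, Matrix.transpose_nonsing_inv]
    have hτe : ∀ v : Fin n → R, (fun i => τ (e v i)) = c v := by
      intro v; funext i; simp [he, hc, hτ]
    have hτc : ∀ v : Fin n → R, (fun i => τ (c v i)) = e v := by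
      intro v; funext i; simp [he, hc, hτ, hσ]
    have hτpair : τ (seifertPairing σ H b a) = -(c b ⬝ᵥ (M⁻¹)ᵀ *ᵥ e a) := by
      rw [hpair, map_neg]
      congr 1
      have : τ (e b ⬝ᵥ M⁻¹ *ᵥ c a) =
          (fun i => τ (e b i)) ⬝ᵥ (fun i => τ ((M⁻¹ *ᵥ c a) i)) := by
        simp [dotProduct, map_sum]
      rw [this, hτe]
      congr 1
      funext i
      have : τ ((M⁻¹ *ᵥ c a) i) = ((M⁻¹.map ⇑τ) *ᵥ fun j => τ (c a j)) i := by
        simp [Matrix.mulVec, dotProduct, map_sum]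
      rw [this, hτc, hinvmap]
    rw [hτpair, hpair]
    congr 1
    rw [Matrix.mulVec_transpose, Matrix.dotProduct_mulVec, dotProduct_comm]
end
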